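/- Let X be a Banach space, Λ ⊆ X* a norming set (i.e. ‖x‖ = sup{|⟨x, y⟩|/‖y‖ : y ∈ Λ, y ≠ 0} for all x ∈ X), F a finite-dimensional subspace of X, and ε > 0. Then there exist finitely many functionals y₁*, …, y_k* ∈ Λ such that M = ⋂_{j=1}^k Ker(y_j*) satisfies ‖f + m‖ ≥ (1 − ε)·max{‖f‖, ‖m‖/2} for all f ∈ F and m ∈ M. -/

import Mathlib

/-- Variant with a norming set `Λ ⊆ X*`: the finite-codimensional subspace can be taken as
a finite intersection of kernels of functionals from `Λ`. -/
theorem stmt_1 (X : Type*) [NormedAddCommGroup X] [NormedSpace ℂ X] [CompleteSpace X]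
    (Λ : Set (X →L[ℂ] ℂ))
    (hΛ : ∀ x : X, ‖x‖ = sSup {r : ℝ | ∃ y ∈ Λ, y ≠ 0 ∧ r = ‖y x‖ / ‖y‖})
    (F : Submodule ℂ X) (hF : FiniteDimensional ℂ F) (ε : ℝ) (hε : 0 < ε) :
    ∃ (k : ℕ) (y : Fin k → (X →L[ℂ] ℂ)), (∀ j, y j ∈ Λ) ∧
      ∀ f ∈ F, ∀ m : X, (∀ j, y j m = 0) →
        ‖f + m‖ ≥ (1 - ε) * max ‖f‖ (‖m‖ / 2) := by
  by_cases hε1 : 1 ≤ ε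
  · refine ⟨0, Fin.elim0, fun j => j.elim0, fun f hf m hm => ?_⟩
    have h1 : (1 - ε) ≤ 0 := by linarith
    have h2 : (0:ℝ) ≤ max ‖f‖ (‖m‖ / 2) := le_max_of_le_left (norm_nonneg f)
    calc (1 - ε) * max ‖f‖ (‖m‖ / 2) ≤ 0 := mul_nonpos_of_nonpos_of_nonneg h1 h2
      _ ≤ ‖f + m‖ := norm_nonneg _
  push_neg at hε1
  -- sphere of F in X
  set S : Set X := (↑) '' (Metric.sphere (0 : F) 1) with hS_def
  have hScpt : IsCompact S := (isCompact_sphere (0:F) 1).image continuous_subtype_val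
  have hScover : S ⊆ ⋃ x ∈ S, Metric.ball x (ε/2) := fun x hx =>
    Set.mem_biUnion hx (Metric.mem_ball_self (by linarith))
  obtain ⟨t, htS, htfin, htcover⟩ :=
    hScpt.elim_finite_subcover_image (fun x _ => Metric.isOpen_ball) hScover
  -- choose functionals for points of t
  have hchoice : ∀ x : X, x ∈ t → ∃ y : X →L[ℂ] ℂ, y ∈ Λ ∧ y ≠ 0 ∧ 1 - ε/2 < ‖y x‖ / ‖y‖ := by
    intro x hxt
    have hxS : x ∈ S := htS hxt
    have hx1 : ‖x‖ = 1 := by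
      obtain ⟨z, hz, rfl⟩ := hxS
      simpa [mem_sphere_iff_norm] using hz
    have hne : {r : ℝ | ∃ y ∈ Λ, y ≠ 0 ∧ r = ‖y x‖ / ‖y‖}.Nonempty := by
      by_contra h
      rw [Set.not_nonempty_iff_eq_empty] at h
      have := hΛ x
      rw [h, Real.sSup_empty] at this
      rw [hx1] at this
      norm_num at this
    have hlt : 1 - ε/2 < sSup {r : ℝ | ∃ y ∈ Λ, y ≠ 0 ∧ r = ‖y x‖ / ‖y‖} := by
      rw [← hΛ x, hx1]; linarith
    obtain ⟨r, hr, hrlt⟩ := exists_lt_of_lt_csSup hne hlt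
    obtain ⟨y, hyΛ, hy0, rfl⟩ := hr
    exact ⟨y, hyΛ, hy0, hrlt⟩
  choose! g hg1 hg2 hg3 using hchoice
  set s : Finset X := htfin.toFinset with hs_def
  refine ⟨s.card, fun j => g (s.equivFin.symm j), fun j => hg1 _ (htfin.mem_toFinset.mp (s.equivFin.symm j).2), ?_⟩
  intro f hf m hm
  have hker : ∀ x ∈ t, g x m = 0 := by
    intro x hxt
    have hxs : x ∈ s := htfin.mem_toFinset.mpr hxt
    have := hm (s.equivFin ⟨x, hxs⟩)
    simpa using this
  -- key: unit vectors
  have key : ∀ u ∈ S, ∀ m' : X, (∀ x ∈ t, g x m' = 0) → (1 - ε) ≤ ‖u + m'‖ := by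
    intro u huS m' hker' 
    obtain ⟨x, hxt, hux⟩ := Set.mem_iUnion₂.mp (htcover huS)
    have hgx0 : g x ≠ 0 := hg2 x hxt
    have hgxnorm : 0 < ‖g x‖ := norm_pos_iff.mpr hgx0
    have hdist : ‖u - x‖ < ε/2 := by
      rw [← dist_eq_norm]; exact hux
    have h1 : ‖g x x‖ ≤ ‖g x u‖ + ‖g x‖ * ‖u - x‖ := by
      have : ‖g x x - g x u‖ ≤ ‖g x‖ * ‖x - u‖ := by
        rw [← map_sub]; exact (g x).le_opNorm _
      have h2 := norm_sub_norm_le (g x x) (g x u)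
      rw [norm_sub_rev u x]
      linarith
    have h3 : ‖g x u‖ ≤ ‖g x‖ * ‖u + m'‖ := by
      have heq : g x (u + m') = g x u := by rw [map_add, hker' x hxt, add_zero]
      calc ‖g x u‖ = ‖g x (u + m')‖ := by rw [heq]
        _ ≤ ‖g x‖ * ‖u + m'‖ := (g x).le_opNorm _
    have h4 : 1 - ε/2 < ‖g x x‖ / ‖g x‖ := hg3 x hxt
    have h5 : (1 - ε/2) * ‖g x‖ < ‖g x x‖ := (lt_div_iff₀ hgxnorm).mp h4
    nlinarith [norm_nonneg (u + m')]
  -- scale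
  have main : (1 - ε) * ‖f‖ ≤ ‖f + m‖ := by
    rcases eq_or_ne f 0 with rfl | hf0
    · simp
    · have hfn : 0 < ‖f‖ := norm_pos_iff.mpr hf0
      set c : ℂ := (‖f‖ : ℂ)⁻¹ with hc
      have hcnorm : ‖c‖ = ‖f‖⁻¹ := by
        simp [hc]
      have hcf : c • f ∈ F := F.smul_mem c hf
      have huS : c • f ∈ S := by
        refine ⟨⟨c • f, hcf⟩, ?_, rfl⟩
        rw [mem_sphere_iff_norm, sub_zero]
        show ‖c • f‖ = 1
        rw [norm_smul, hcnorm, inv_mul_cancel₀ (ne_of_gt hfn)]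
      have hmker : ∀ x ∈ t, g x (c • m) = 0 := by
        intro x hxt
        rw [map_smul, hker x hxt, smul_zero]
      have := key (c • f) huS (c • m) hmker
      rw [← smul_add, norm_smul, hcnorm] at this
      rw [← mul_le_mul_iff_right₀ hfn] at this
      calc (1 - ε) * ‖f‖ = ‖f‖ * (1 - ε) := by ring
        _ ≤ ‖f‖ * (‖f‖⁻¹ * ‖f + m‖) := this
        _ = ‖f + m‖ := by field_simp
  have hm2 : ‖m‖ ≤ ‖f + m‖ + ‖f‖ := by
    have h := norm_sub_le (f + m) f
    rwa [add_sub_cancel_left] at h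
  rw [ge_iff_le, mul_max_of_nonneg _ _ (by linarith : (0:ℝ) ≤ 1 - ε)]
  refine max_le main ?_
  nlinarith [norm_nonneg (f+m), norm_nonneg f]
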